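/- Let E ⊆ ℝ^N be a measurable set such that for every x belonging to the set Ê of points of positive lower density of E, and every direction v in a fixed open cone C (nonempty open convex cone with vertex 0), the segment x + (0,η)v is contained in Ê for some fixed η > 0. Then the closure of Ê differs from Ê by a Lebesgue-null set. -/

import Mathlib

open MeasureTheory Filter ENNReal Pointwise

theorem stmt12 (N : ℕ) (E : Set (EuclideanSpace ℝ (Fin N))) (hE : MeasurableSet E)
    (Ehat : Set (EuclideanSpace ℝ (Fin N)))
    (hEhat : Ehat = {x | 0 < liminf
        (fun r => volume (E ∩ Metric.ball x r) / volume (Metric.ball x r))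
        (nhdsWithin 0 (Set.Ioi 0))})
    (C : Set (EuclideanSpace ℝ (Fin N))) (hCopen : IsOpen C) (hCconv : Convex ℝ C)
    (hCne : C.Nonempty) (hCcone : ∀ (c : ℝ), 0 < c → ∀ v ∈ C, c • v ∈ C)
    (η : ℝ) (hη : 0 < η)
    (hcone : ∀ x ∈ Ehat, ∀ v ∈ C, ∀ s ∈ Set.Ioo (0 : ℝ) η, x + s • v ∈ Ehat) :
    volume (closure Ehat \ Ehat) = 0 := by
  classical
  set A : Set (EuclideanSpace ℝ (Fin N)) := closure Ehat \ Ehat with hA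
  by_contra hApos
  -- Step 1: Ehat is stable under adding elements of C
  have step1 : ∀ y ∈ Ehat, ∀ v ∈ C, y + v ∈ Ehat := by
    intro y hy v hv
    have hs : η / 2 ∈ Set.Ioo (0 : ℝ) η := ⟨by linarith, by linarith⟩
    have hvin : (η / 2)⁻¹ • v ∈ C := hCcone _ (by positivity) v hv
    have h := hcone y hy _ hvin _ hs
    rwa [smul_inv_smul₀ (by positivity : (η / 2 : ℝ) ≠ 0)] at h
  -- Step 2: points of the closure also move into Ehat along C
  have step2 : ∀ x ∈ closure Ehat, ∀ v ∈ C, x + v ∈ Ehat := by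
    intro x hx v hv
    obtain ⟨ε, hε, hball⟩ := Metric.isOpen_iff.1 hCopen v hv
    obtain ⟨y, hy, hyx⟩ := Metric.mem_closure_iff.1 hx ε hε
    have hw : x - y + v ∈ C := by
      apply hball
      have : dist (x - y + v) v = dist x y := by
        rw [dist_eq_norm, dist_eq_norm]
        congr 1
        abel
      rwa [Metric.mem_ball, this]
    have := step1 y hy _ hw
    have hxy : y + (x - y + v) = x + v := by abel
    rwa [hxy] at this
  -- Step 3: find a Lebesgue density point of A inside A
  have hd := Besicovitch.ae_tendsto_measure_inter_div volume A
  have hex : ∃ x ∈ A, Tendsto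
      (fun r => volume (A ∩ Metric.closedBall x r) / volume (Metric.closedBall x r))
      (nhdsWithin 0 (Set.Ioi 0)) (nhds 1) := by
    by_contra h
    push_neg at h
    have hsub : A ⊆ {x | ¬ Tendsto
        (fun r => volume (A ∩ Metric.closedBall x r) / volume (Metric.closedBall x r))
        (nhdsWithin 0 (Set.Ioi 0)) (nhds 1)} := fun x hx => h x hx
    have h0 : (volume.restrict A) {x | ¬ Tendsto
        (fun r => volume (A ∩ Metric.closedBall x r) / volume (Metric.closedBall x r))
        (nhdsWithin 0 (Set.Ioi 0)) (nhds 1)} = 0 := ae_iff.1 hd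
    have hle : volume A ≤ (volume.restrict A) {x | ¬ Tendsto
        (fun r => volume (A ∩ Metric.closedBall x r) / volume (Metric.closedBall x r))
        (nhdsWithin 0 (Set.Ioi 0)) (nhds 1)} := by
      calc volume A = volume ({x | ¬ Tendsto
            (fun r => volume (A ∩ Metric.closedBall x r) / volume (Metric.closedBall x r))
            (nhdsWithin 0 (Set.Ioi 0)) (nhds 1)} ∩ A) := by
            rw [Set.inter_eq_right.2 hsub]
        _ ≤ _ := Measure.le_restrict_apply _ _
    exact hApos (le_antisymm (h0 ▸ hle) zero_le)
  obtain ⟨x, hxA, hxT⟩ := hex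
  have hxcl : x ∈ closure Ehat := hxA.1
  -- Measure constants
  set m : ℝ≥0∞ := volume (Metric.ball (0 : EuclideanSpace ℝ (Fin N)) 1) with hm
  set c1 : ℝ≥0∞ := volume (C ∩ Metric.ball (0 : EuclideanSpace ℝ (Fin N)) 1) with hc1
  have hmpos : 0 < m := Metric.measure_ball_pos volume _ one_pos
  have hmtop : m ≠ ⊤ := measure_ball_lt_top.ne
  -- c1 > 0 : C ∩ ball 0 1 is a nonempty open set
  have hc1pos : 0 < c1 := by
    obtain ⟨v, hv⟩ := hCne
    have hwpos : (0:ℝ) < (2 * (‖v‖ + 1))⁻¹ := by positivity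
    have hw : (2 * (‖v‖ + 1))⁻¹ • v ∈ C := hCcone _ hwpos v hv
    have hwball : (2 * (‖v‖ + 1))⁻¹ • v ∈ Metric.ball (0 : EuclideanSpace ℝ (Fin N)) 1 := by
      rw [Metric.mem_ball, dist_zero_right, norm_smul, Real.norm_eq_abs,
        abs_of_pos hwpos]
      have h1 : ‖v‖ < 2 * (‖v‖ + 1) := by nlinarith [norm_nonneg v]
      rw [inv_mul_lt_iff₀ (by positivity), mul_one]
      exact h1
    exact (hCopen.inter Metric.isOpen_ball).measure_pos volume ⟨_, hw, hwball⟩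
  have hc1top : c1 ≠ ⊤ :=
    (lt_of_le_of_lt (measure_mono Set.inter_subset_right) measure_ball_lt_top).ne
  have hc1le : c1 ≤ m := measure_mono Set.inter_subset_right
  -- The density ratio is bounded away from 1 at every scale
  have hbound : ∀ r : ℝ, 0 < r →
      volume (A ∩ Metric.closedBall x r) / volume (Metric.closedBall x r) ≤ (m - c1) / m := by
    intro r hr
    set S : Set (EuclideanSpace ℝ (Fin N)) := x +ᵥ (C ∩ Metric.ball 0 r) with hS
    have hSmeas : MeasurableSet S := by
      have : IsOpen (C ∩ Metric.ball (0 : EuclideanSpace ℝ (Fin N)) r) :=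
        hCopen.inter Metric.isOpen_ball
      exact (this.vadd x).measurableSet
    have hSsub : S ⊆ Metric.closedBall x r := by
      rintro _ ⟨z, ⟨_, hz2⟩, rfl⟩
      rw [Metric.mem_ball, dist_zero_right] at hz2
      simpa [Metric.mem_closedBall, dist_eq_norm, vadd_eq_add] using hz2.le
    have hSdisj : A ∩ S = ∅ := by
      ext z
      simp only [Set.mem_inter_iff, Set.mem_empty_iff_false, iff_false, not_and]
      rintro hzA ⟨w, ⟨hw1, _⟩, rfl⟩
      exact hzA.2 (step2 x hxcl w hw1)
    -- scaling: C ∩ ball 0 r = r • (C ∩ ball 0 1)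
    have hscale : C ∩ Metric.ball 0 r = r • (C ∩ Metric.ball (0:EuclideanSpace ℝ (Fin N)) 1) := by
      ext z
      constructor
      · rintro ⟨hz1, hz2⟩
        refine ⟨r⁻¹ • z, ⟨hCcone _ (by positivity) z hz1, ?_⟩, by
          simp [smul_inv_smul₀ hr.ne']⟩
        rw [Metric.mem_ball, dist_zero_right, norm_smul, Real.norm_eq_abs,
          abs_of_pos (by positivity : (0:ℝ) < r⁻¹)]
        rw [Metric.mem_ball, dist_zero_right] at hz2
        rw [inv_mul_lt_iff₀ hr, mul_one]
        exact hz2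
      · rintro ⟨w, ⟨hw1, hw2⟩, rfl⟩
        refine ⟨hCcone _ hr w hw1, ?_⟩
        rw [Metric.mem_ball, dist_zero_right, norm_smul, Real.norm_eq_abs, abs_of_pos hr]
        rw [Metric.mem_ball, dist_zero_right] at hw2
        calc r * ‖w‖ < r * 1 := by exact (mul_lt_mul_iff_right₀ hr).2 hw2
          _ = r := mul_one r
    have hSvol : volume S = ENNReal.ofReal (r ^ N) * c1 := by
      rw [hS, measure_vadd, hscale, Measure.addHaar_smul, finrank_euclideanSpace_fin,
        abs_of_pos (pow_pos hr N)]
    have hBvol : volume (Metric.closedBall x r) = ENNReal.ofReal (r ^ N) * m := by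
      rw [Measure.addHaar_closedBall volume x hr.le, finrank_euclideanSpace_fin, hm]
    have hnum : volume (A ∩ Metric.closedBall x r) ≤ ENNReal.ofReal (r ^ N) * (m - c1) := by
      have h1 : A ∩ Metric.closedBall x r ⊆ Metric.closedBall x r \ S := by
        rintro z ⟨hz1, hz2⟩
        refine ⟨hz2, fun hzS => ?_⟩
        have : z ∈ A ∩ S := ⟨hz1, hzS⟩
        rw [hSdisj] at this
        exact this
      calc volume (A ∩ Metric.closedBall x r) ≤ volume (Metric.closedBall x r \ S) :=
            measure_mono h1
        _ = volume (Metric.closedBall x r) - volume S :=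
            measure_diff hSsub hSmeas.nullMeasurableSet
              (hSvol ▸ ENNReal.mul_ne_top ENNReal.ofReal_ne_top hc1top)
        _ = ENNReal.ofReal (r ^ N) * m - ENNReal.ofReal (r ^ N) * c1 := by rw [hSvol, hBvol]
        _ = ENNReal.ofReal (r ^ N) * (m - c1) := by
            rw [ENNReal.mul_sub (fun _ _ => ENNReal.ofReal_ne_top)]
    have hrN : ENNReal.ofReal (r ^ N) ≠ 0 := by
      simp [ENNReal.ofReal_eq_zero, not_le, pow_pos hr]
    calc volume (A ∩ Metric.closedBall x r) / volume (Metric.closedBall x r)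
        ≤ (ENNReal.ofReal (r ^ N) * (m - c1)) / (ENNReal.ofReal (r ^ N) * m) := by
          rw [hBvol]
          exact ENNReal.div_le_div_right hnum _
      _ = (m - c1) / m := ENNReal.mul_div_mul_left _ _ hrN ENNReal.ofReal_ne_top
  -- Take the limit to get a contradiction
  have hle1 : (1 : ℝ≥0∞) ≤ (m - c1) / m := by
    refine le_of_tendsto hxT ?_
    filter_upwards [self_mem_nhdsWithin] with r hr
    exact hbound r hr
  have hlt : (m - c1) / m < 1 := by
    rw [ENNReal.div_lt_iff (Or.inl hmpos.ne') (Or.inl hmtop), one_mul]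
    exact ENNReal.sub_lt_self hmtop hmpos.ne' hc1pos.ne'
  exact absurd hle1 (not_le.2 hlt)
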